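/- For all integers t, r, k with 1 ≤ t < r and k > t(2r+1)/(2t+1), there exists a (2t+1)-connected (2r+1)-regular finite simple graph that has no 2k-factor. -/

import Mathlib

open scoped Classical
noncomputable section

/-- A graph is `m`-connected if it has more than `m` vertices and remains connected after
deleting any fewer than `m` vertices. -/
def SimpleGraph.IsMConnected {V : Type} [Fintype V] (G : SimpleGraph V) (m : ℕ) : Prop :=
  m < Fintype.card V ∧ ∀ K : Set V, K.ncard < m → (G.induce Kᶜ).Connected

variable (t r : ℕ)

/-- component vertex type: cycle part + matching part -/
abbrev Cc := ZMod (2*t+1) ⊕ (Fin (r - t + 1) × Bool)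

/-- non-adjacency (complement) structure inside a component -/
def cpl : Cc t r → Cc t r → Prop
  | .inl x, .inl y => x = y + 1 ∨ y = x + 1
  | .inr p, .inr p' => p.1 = p'.1 ∧ p.2 ≠ p'.2
  | _, _ => False

lemma cpl_symm : ∀ a b, cpl t r a b → cpl t r b a := by
  rintro (x|p) (y|q) h <;> simp [cpl] at h ⊢ <;> tauto

abbrev Vtx := ZMod (2*t+1) ⊕ (Fin (2*r+1) × Cc t r)

def adj : Vtx t r → Vtx t r → Prop
  | .inl _, .inl _ => False
  | .inl x, .inr p => p.2 = .inl x
  | .inr p, .inl x => p.2 = .inl x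
  | .inr p, .inr q => p.1 = q.1 ∧ p.2 ≠ q.2 ∧ ¬ cpl t r p.2 q.2

def G : SimpleGraph (Vtx t r) where
  Adj := adj t r
  symm := by
    constructor
    rintro (x|⟨j,c⟩) (y|⟨j',c'⟩) h
    · exact h
    · exact h
    · exact h
    · simp only [adj] at h ⊢
      exact ⟨h.1.symm, Ne.symm h.2.1, fun hc => h.2.2 (cpl_symm t r _ _ hc)⟩
  loopless := by
    constructor
    rintro (x|⟨j,c⟩) h <;> simp [adj] at h

variable (ht : 1 ≤ t) (htr : t < r)

instance : NeZero (2*t+1) := ⟨Nat.succ_ne_zero _⟩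

lemma card_Cc (htr : t ≤ r) : Fintype.card (Cc t r) = 2*r + 3 := by
  simp [Fintype.card_sum, Fintype.card_prod, ZMod.card]
  omega

lemma zmodOne_ne_zero (ht : 1 ≤ t) : (1 : ZMod (2*t+1)) ≠ 0 := by
  intro h
  rw [show (1 : ZMod (2*t+1)) = ((1:ℕ) : ZMod (2*t+1)) by simp] at h
  rw [ZMod.natCast_eq_zero_iff] at h
  have := Nat.le_of_dvd one_pos h
  omega

lemma zmodTwo_ne_zero (ht : 1 ≤ t) : (2 : ZMod (2*t+1)) ≠ 0 := by
  intro h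
  rw [show (2 : ZMod (2*t+1)) = ((2:ℕ) : ZMod (2*t+1)) by simp] at h
  rw [ZMod.natCast_eq_zero_iff] at h
  have := Nat.le_of_dvd two_pos h
  omega

lemma filter_cpl_inl (x : ZMod (2*t+1)) :
    (Finset.univ.filter fun c' : Cc t r => c' = .inl x ∨ cpl t r (.inl x) c')
      = {.inl x, .inl (x+1), .inl (x-1)} := by
  ext c'
  rcases c' with y | p <;>
    simp only [Finset.mem_filter, Finset.mem_univ, true_and] <;>
    simp [cpl, Finset.mem_insert, Finset.mem_singleton]
  constructor
  · rintro (h | h | h)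
    · exact Or.inl h
    · right; right; rw [h]; ring
    · right; left; exact h
  · rintro (h | h | h)
    · exact Or.inl h
    · right; right; exact h
    · right; left; rw [h]; ring

lemma filter_cpl_inl_card (ht : 1 ≤ t) (x : ZMod (2*t+1)) :
    (Finset.univ.filter fun c' : Cc t r => c' = .inl x ∨ cpl t r (.inl x) c').card = 3 := by
  rw [filter_cpl_inl]
  rw [Finset.card_insert_of_notMem, Finset.card_insert_of_notMem, Finset.card_singleton]
  · simp only [Finset.mem_singleton, ne_eq, Sum.inl.injEq]
    intro h
    apply zmodTwo_ne_zero t ht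
    have : x + 1 - (x - 1) = 0 := by rw [h]; ring
    calc (2 : ZMod (2*t+1)) = x + 1 - (x-1) := by ring
    _ = 0 := this
  · simp only [Finset.mem_insert, Finset.mem_singleton, Sum.inl.injEq]
    rintro (h | h)
    · exact zmodOne_ne_zero t ht (by calc (1:ZMod (2*t+1)) = (x+1) - x := by ring
                                    _ = 0 := by rw [← h]; ring)
    · exact zmodOne_ne_zero t ht (by calc (1:ZMod (2*t+1)) = x - (x-1) := by ring
                                    _ = 0 := by rw [← h]; ring)

lemma filter_cpl_inr_card (p : Fin (r-t+1) × Bool) :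
    (Finset.univ.filter fun c' : Cc t r => c' = .inr p ∨ cpl t r (.inr p) c').card = 2 := by
  have : (Finset.univ.filter fun c' : Cc t r => c' = .inr p ∨ cpl t r (.inr p) c')
      = {.inr p, .inr (p.1, !p.2)} := by
    ext c'
    rcases c' with y | q <;> simp only [Finset.mem_filter, Finset.mem_univ, true_and] <;> simp [cpl, Finset.mem_insert, Finset.mem_singleton]
    constructor
    · rintro (h | ⟨h1, h2⟩)
      · exact Or.inl h
      · right
        rw [Prod.ext_iff]
        exact ⟨h1.symm, by rcases q with ⟨s, (b|b)⟩ <;> rcases hp : p.2 <;> simp_all⟩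
    · rintro (h | h)
      · exact Or.inl h
      · right
        rw [h]
        exact ⟨rfl, by simp⟩
  rw [this, Finset.card_insert_of_notMem, Finset.card_singleton]
  simp only [Finset.mem_singleton, ne_eq, Sum.inr.injEq]
  intro h
  have := congrArg Prod.snd h
  simp at this

lemma comp_nbr_card_inl (ht : 1 ≤ t) (htr : t ≤ r) (x : ZMod (2*t+1)) :
    (Finset.univ.filter fun c' : Cc t r => ¬(c' = .inl x ∨ cpl t r (.inl x) c')).card
      = 2*r := by
  rw [Finset.filter_not, Finset.card_sdiff_of_subset (Finset.filter_subset _ _)]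
  rw [Finset.card_univ, card_Cc t r htr, filter_cpl_inl_card t r ht]
  omega

lemma comp_nbr_card_inr (htr : t ≤ r) (p : Fin (r-t+1) × Bool) :
    (Finset.univ.filter fun c' : Cc t r => ¬(c' = .inr p ∨ cpl t r (.inr p) c')).card
      = 2*r + 1 := by
  rw [Finset.filter_not, Finset.card_sdiff_of_subset (Finset.filter_subset _ _)]
  rw [Finset.card_univ, card_Cc t r htr, filter_cpl_inr_card]
  omega

lemma nbrFinset_inl (x : ZMod (2*t+1)) :
    (G t r).neighborFinset (.inl x)
      = Finset.univ.image (fun j : Fin (2*r+1) => (.inr (j, .inl x) : Vtx t r)) := by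
  ext w
  rw [SimpleGraph.mem_neighborFinset]
  rcases w with y | ⟨j, c⟩ <;> simp [G, adj]
  tauto

lemma degree_inl (x : ZMod (2*t+1)) : (G t r).degree (.inl x) = 2*r + 1 := by
  rw [SimpleGraph.degree, nbrFinset_inl, Finset.card_image_of_injective]
  · simp
  · intro a b hab
    simpa using hab

lemma nbrFinset_inr_inl (j : Fin (2*r+1)) (x : ZMod (2*t+1)) :
    (G t r).neighborFinset (.inr (j, .inl x))
      = insert (.inl x : Vtx t r)
        ((Finset.univ.filter fun c' : Cc t r => ¬(c' = .inl x ∨ cpl t r (.inl x) c')).image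
          (fun c' => (.inr (j, c') : Vtx t r))) := by
  ext w
  rw [SimpleGraph.mem_neighborFinset]
  rcases w with y | ⟨j', c'⟩ <;>
    simp [G, adj, eq_comm (a := j)] <;> tauto

lemma nbrFinset_inr_inr (j : Fin (2*r+1)) (p : Fin (r-t+1) × Bool) :
    (G t r).neighborFinset (.inr (j, .inr p))
      = (Finset.univ.filter fun c' : Cc t r => ¬(c' = .inr p ∨ cpl t r (.inr p) c')).image
          (fun c' => (.inr (j, c') : Vtx t r)) := by
  ext w
  rw [SimpleGraph.mem_neighborFinset]
  rcases w with y | ⟨j', c'⟩ <;>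
    simp [G, adj, eq_comm (a := j)] <;> tauto

lemma degree_G (ht : 1 ≤ t) (htr : t ≤ r) (v : Vtx t r) : (G t r).degree v = 2*r + 1 := by
  rcases v with x | ⟨j, c⟩
  · exact degree_inl t r x
  rcases c with x | p
  · rw [SimpleGraph.degree, nbrFinset_inr_inl, Finset.card_insert_of_notMem (by simp),
      Finset.card_image_of_injective _ (fun a b hab => by simpa using hab),
      comp_nbr_card_inl t r ht htr]
  · rw [SimpleGraph.degree, nbrFinset_inr_inr,
      Finset.card_image_of_injective _ (fun a b hab => by simpa using hab),
      comp_nbr_card_inr t r htr]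

lemma H_nbrFinset_inl (H : SimpleGraph (Vtx t r)) (hle : H ≤ G t r) (x : ZMod (2*t+1)) :
    H.neighborFinset (.inl x)
      = (Finset.univ.filter fun j : Fin (2*r+1) => H.Adj (.inl x) (.inr (j, .inl x))).image
          (fun j => (.inr (j, .inl x) : Vtx t r)) := by
  ext w
  rw [SimpleGraph.mem_neighborFinset]
  simp only [Finset.mem_image, Finset.mem_filter, Finset.mem_univ, true_and]
  constructor
  · intro h
    have hg := hle h
    rcases w with y | ⟨j, c⟩
    · simp [G, adj] at hg
    · simp only [G, adj] at hg
      exact ⟨j, by rw [hg] at h ⊢; exact ⟨h, rfl⟩⟩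
  · rintro ⟨j, hj, rfl⟩
    exact hj

lemma H_degree_inl (H : SimpleGraph (Vtx t r)) (hle : H ≤ G t r) (x : ZMod (2*t+1)) :
    H.degree (.inl x)
      = (Finset.univ.filter fun j : Fin (2*r+1) => H.Adj (.inl x) (.inr (j, .inl x))).card := by
  rw [SimpleGraph.degree, H_nbrFinset_inl t r H hle x,
    Finset.card_image_of_injective _ (fun a b hab => by simpa using hab)]

lemma H_nbrFinset_inr (H : SimpleGraph (Vtx t r)) (hle : H ≤ G t r) (j : Fin (2*r+1))
    (c : Cc t r) :
    H.neighborFinset (.inr (j,c))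
      = (((H.comap (fun c' : Cc t r => (.inr (j,c') : Vtx t r))).neighborFinset c).image
          fun c' => (.inr (j,c') : Vtx t r)) ∪
        (match c with
         | .inl x => if H.Adj (.inr (j,c)) (.inl x) then ({.inl x} : Finset (Vtx t r)) else ∅
         | .inr _ => (∅ : Finset (Vtx t r))) := by
  ext w
  rw [SimpleGraph.mem_neighborFinset, Finset.mem_union]
  constructor
  · intro h
    have hg := hle h
    rcases w with y | ⟨j', c'⟩
    · right
      simp only [G, adj] at hg
      rcases c with x | p
      · simp only [Sum.inl.injEq] at hg
        subst hg
        simp [h]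
      · simp at hg
    · left
      simp only [G, adj] at hg
      obtain ⟨rfl, -, -⟩ := hg
      simp only [Finset.mem_image, SimpleGraph.mem_neighborFinset, SimpleGraph.comap_adj]
      exact ⟨c', h, rfl⟩
  · rintro (h | h)
    · simp only [Finset.mem_image, SimpleGraph.mem_neighborFinset, SimpleGraph.comap_adj] at h
      obtain ⟨c', hc', rfl⟩ := h
      exact hc'
    · rcases c with x | p
      · by_cases hA : H.Adj (.inr (j, .inl x)) (.inl x)
        · simp only [hA, if_true, Finset.mem_singleton] at h
          subst h
          exact hA
        · simp [hA] at h
      · simp at h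

lemma H_degree_inr (H : SimpleGraph (Vtx t r)) (hle : H ≤ G t r) (j : Fin (2*r+1))
    (c : Cc t r) :
    H.degree (.inr (j,c))
      = (H.comap (fun c' : Cc t r => (.inr (j,c') : Vtx t r))).degree c +
        (match c with
         | .inl x => if H.Adj (.inr (j,c)) (.inl x) then 1 else 0
         | .inr _ => 0) := by
  rw [SimpleGraph.degree, H_nbrFinset_inr t r H hle j c, Finset.card_union_of_disjoint]
  · congr 1
    · exact Finset.card_image_of_injective _ (fun a b hab => by simpa using hab)
    · rcases c with x | p
      · by_cases hA : H.Adj (.inr (j, .inl x)) (.inl x) <;> simp [hA]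
      · simp
  · rw [Finset.disjoint_left]
    intro w hw hw'
    simp only [Finset.mem_image] at hw
    obtain ⟨c', -, rfl⟩ := hw
    rcases c with x | p
    · by_cases hA : H.Adj (.inr (j, .inl x)) (.inl x) <;> simp [hA] at hw'
    · simp at hw'

lemma nj_even (H : SimpleGraph (Vtx t r)) (hle : H ≤ G t r) (k : ℕ)
    (hdeg : ∀ v : Vtx t r, H.degree v = 2*k) (j : Fin (2*r+1)) :
    Even ((Finset.univ.filter fun x : ZMod (2*t+1) =>
      H.Adj (.inl x) (.inr (j, .inl x))).card) := by
  classical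
  set Hj := H.comap (fun c' : Cc t r => (.inr (j,c') : Vtx t r)) with hHj
  have hsum : ∑ c : Cc t r, H.degree (.inr (j,c))
      = (∑ c : Cc t r, Hj.degree c) +
        ∑ x : ZMod (2*t+1), (if H.Adj (.inr (j, .inl x)) (.inl x) then 1 else 0) := by
    have h2 : ∀ c : Cc t r,
        H.degree (.inr (j,c)) = Hj.degree c +
          (match c with
           | .inl x => if H.Adj (.inr (j,c)) (.inl x) then 1 else 0
           | .inr _ => 0) := fun c => H_degree_inr t r H hle j c
    calc ∑ c : Cc t r, H.degree (.inr (j,c))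
        = ∑ c : Cc t r, (Hj.degree c +
            (match c with
             | .inl x => if H.Adj (.inr (j,c)) (.inl x) then 1 else 0
             | .inr _ => 0)) := Finset.sum_congr rfl (fun c _ => h2 c)
      _ = (∑ c : Cc t r, Hj.degree c) +
          ∑ c : Cc t r, (match c with
             | .inl x => if H.Adj (.inr (j,c)) (.inl x) then 1 else 0
             | .inr _ => 0) := Finset.sum_add_distrib
      _ = _ := by
          congr 1
          rw [Fintype.sum_sum_type]
          simp
  have hTeq : ∑ x : ZMod (2*t+1), (if H.Adj (.inr (j, .inl x)) (.inl x) then 1 else 0)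
      = (Finset.univ.filter fun x : ZMod (2*t+1) =>
          H.Adj (.inl x) (.inr (j, .inl x))).card := by
    rw [Finset.card_filter]
    apply Finset.sum_congr rfl
    intro x _
    congr 1
    simp [SimpleGraph.adj_comm]
  have hL : ∑ c : Cc t r, H.degree (.inr (j,c)) = (Fintype.card (Cc t r)) * (2*k) := by
    rw [Finset.sum_congr rfl (fun c _ => hdeg (.inr (j,c)))]
    simp [mul_comm]
  have hE : Even (∑ c : Cc t r, Hj.degree c) := by
    rw [SimpleGraph.sum_degrees_eq_twice_card_edges]
    exact even_two_mul _
  rw [hTeq, hL] at hsum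
  obtain ⟨m, hm⟩ := hE
  have h2 : Fintype.card (Cc t r) * (2*k) = 2*(Fintype.card (Cc t r) * k) := by ring
  refine ⟨Fintype.card (Cc t r) * k - m, ?_⟩
  omega

lemma no_factor (ht : 1 ≤ t) (htr : t < r) (k : ℕ) (hk : t * (2 * r + 1) < k * (2 * t + 1))
    (H : SimpleGraph (Vtx t r)) (hle : H ≤ G t r)
    (hdeg : ∀ v : Vtx t r, H.degree v = 2*k) : False := by
  classical
  have hdc : (2*t+1) * (2*k)
      = ∑ j : Fin (2*r+1), (Finset.univ.filter fun x : ZMod (2*t+1) =>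
          H.Adj (.inl x) (.inr (j, .inl x))).card := by
    have h1 : ∑ x : ZMod (2*t+1), H.degree (.inl x) = (2*t+1) * (2*k) := by
      rw [Finset.sum_congr rfl (fun x _ => hdeg (.inl x))]
      simp [ZMod.card, mul_comm]
    rw [← h1]
    rw [Finset.sum_congr rfl (fun x _ => H_degree_inl t r H hle x)]
    simp_rw [Finset.card_filter]
    exact Finset.sum_comm
  have hbound : ∀ j : Fin (2*r+1),
      (Finset.univ.filter fun x : ZMod (2*t+1) =>
        H.Adj (.inl x) (.inr (j, .inl x))).card ≤ 2*t := by
    intro j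
    obtain ⟨m, hm⟩ := nj_even t r H hle k hdeg j
    have hle' : (Finset.univ.filter fun x : ZMod (2*t+1) =>
        H.Adj (.inl x) (.inr (j, .inl x))).card ≤ 2*t+1 := by
      calc _ ≤ (Finset.univ : Finset (ZMod (2*t+1))).card := Finset.card_filter_le _ _
      _ = 2*t+1 := by simp [ZMod.card]
    omega
  have htotal : (2*t+1) * (2*k) ≤ (2*r+1) * (2*t) := by
    rw [hdc]
    calc _ ≤ ∑ _j : Fin (2*r+1), 2*t := Finset.sum_le_sum (fun j _ => hbound j)
    _ = (2*r+1) * (2*t) := by simp [mul_comm]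
  nlinarith

section conn

variable (K : Set (Vtx t r))

lemma exists_good_x (htr : t < r) (hK : K.ncard < 2*t+1) (j j' : Fin (2*r+1)) :
    ∃ x : ZMod (2*t+1), Sum.inl x ∉ K ∧ Sum.inr (j, Sum.inl x) ∉ K ∧
      Sum.inr (j', Sum.inl x) ∉ K := by
  by_contra hcon
  push_neg at hcon
  set F : ZMod (2*t+1) → Vtx t r := fun x =>
    if Sum.inl x ∈ K then Sum.inl x
    else if Sum.inr (j, Sum.inl x) ∈ K then Sum.inr (j, Sum.inl x)
    else Sum.inr (j', Sum.inl x) with hF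
  have hinj : Function.Injective F := by
    intro x y h
    simp only [hF] at h
    split_ifs at h <;> simp_all
  have hmem : ∀ x, F x ∈ K := by
    intro x
    simp only [hF]
    split_ifs with h1 h2
    · exact h1
    · exact h2
    · exact hcon x h1 h2
  have hsub : Finset.univ.image F ⊆ K.toFinset := by
    intro w hw
    simp only [Finset.mem_image] at hw
    obtain ⟨x, -, rfl⟩ := hw
    simpa using hmem x
  have hcard := Finset.card_le_card hsub
  rw [Finset.card_image_of_injective _ hinj, Finset.card_univ, ZMod.card] at hcard
  rw [← Set.ncard_eq_toFinset_card'] at hcard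
  omega

lemma exists_good_j (htr : t < r) (hK : K.ncard < 2*t+1) (x : ZMod (2*t+1)) :
    ∃ j : Fin (2*r+1), Sum.inr (j, Sum.inl x) ∉ K := by
  by_contra hcon
  push_neg at hcon
  have hsub : Finset.univ.image (fun j : Fin (2*r+1) => (Sum.inr (j, Sum.inl x) : Vtx t r))
      ⊆ K.toFinset := by
    intro w hw
    simp only [Finset.mem_image] at hw
    obtain ⟨j, -, rfl⟩ := hw
    simpa using hcon j
  have hcard := Finset.card_le_card hsub
  rw [Finset.card_image_of_injective _ (fun a b hab => by simpa using hab),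
    Finset.card_univ, Fintype.card_fin, ← Set.ncard_eq_toFinset_card'] at hcard
  omega

lemma card_Kj (hK : K.ncard < 2*t+1) (j : Fin (2*r+1)) :
    (Finset.univ.filter fun c : Cc t r => Sum.inr (j, c) ∈ K).card ≤ 2*t := by
  have hsub : (Finset.univ.filter fun c : Cc t r => Sum.inr (j, c) ∈ K).image
      (fun c => (Sum.inr (j, c) : Vtx t r)) ⊆ K.toFinset := by
    intro w hw
    simp only [Finset.mem_image, Finset.mem_filter] at hw
    obtain ⟨c, ⟨-, hc⟩, rfl⟩ := hw
    simpa using hc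
  have hcard := Finset.card_le_card hsub
  rw [Finset.card_image_of_injective _ (fun a b hab => by simpa using hab),
    ← Set.ncard_eq_toFinset_card'] at hcard
  omega

end conn

lemma filter_cpl_inr (p : Fin (r-t+1) × Bool) :
    (Finset.univ.filter fun c' : Cc t r => c' = .inr p ∨ cpl t r (.inr p) c')
      = {.inr p, .inr (p.1, !p.2)} := by
  ext c'
  rcases c' with y | q <;> simp only [Finset.mem_filter, Finset.mem_univ, true_and] <;> simp [cpl, Finset.mem_insert, Finset.mem_singleton]
  constructor
  · rintro (h | ⟨h1, h2⟩)
    · exact Or.inl h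
    · right
      rw [Prod.ext_iff]
      exact ⟨h1.symm, by rcases q with ⟨s, (b|b)⟩ <;> rcases hp : p.2 <;> simp_all⟩
  · rintro (h | h)
    · exact Or.inl h
    · right
      rw [h]
      exact ⟨rfl, by simp⟩

lemma card_le_four {α : Type} [DecidableEq α] (a b c d : α) : ({a,b,c,d} : Finset α).card ≤ 4 := by
  have h1 := Finset.card_insert_le a ({b,c,d} : Finset α)
  have h2 := Finset.card_insert_le b ({c,d} : Finset α)
  have h3 := Finset.card_insert_le c ({d} : Finset α)
  have h4 : ({d} : Finset α).card = 1 := Finset.card_singleton d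
  omega

lemma closed_union_card (ht : 1 ≤ t) (c₁ c₂ : Cc t r) (h : c₁ = c₂ ∨ cpl t r c₁ c₂) :
    ((Finset.univ.filter fun c' : Cc t r => c' = c₁ ∨ cpl t r c₁ c') ∪
     (Finset.univ.filter fun c' : Cc t r => c' = c₂ ∨ cpl t r c₂ c')).card ≤ 4 := by
  rcases h with rfl | hcpl
  · rw [Finset.union_self]
    rcases c₁ with x | p
    · rw [filter_cpl_inl]
      have := card_le_four (.inl x : Cc t r) (.inl (x+1)) (.inl (x-1)) (.inl (x-1))
      simpa using this
    · rw [filter_cpl_inr]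
      have := card_le_four (.inr p : Cc t r) (.inr (p.1,!p.2)) (.inr (p.1,!p.2))
        (.inr (p.1,!p.2))
      simpa using this
  · rcases c₁ with x | p <;> rcases c₂ with y | q
    · -- both on the cycle
      rw [filter_cpl_inl, filter_cpl_inl]
      rcases hcpl with h | h
      · -- x = y + 1
        subst h
        refine le_trans (Finset.card_le_card ?_)
          (card_le_four (.inl (y-1) : Cc t r) (.inl y) (.inl (y+1)) (.inl (y+1+1)))
        intro c hc
        have e1 : y + 1 - 1 = y := by ring
        simp only [Finset.mem_union, Finset.mem_insert, Finset.mem_singleton, e1] at hc ⊢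
        tauto
      · -- y = x + 1
        subst h
        refine le_trans (Finset.card_le_card ?_)
          (card_le_four (.inl (x-1) : Cc t r) (.inl x) (.inl (x+1)) (.inl (x+1+1)))
        intro c hc
        have e1 : x + 1 - 1 = x := by ring
        simp only [Finset.mem_union, Finset.mem_insert, Finset.mem_singleton, e1] at hc ⊢
        tauto
    · simp [cpl] at hcpl
    · simp [cpl] at hcpl
    · -- both in the matching
      rw [filter_cpl_inr, filter_cpl_inr]
      obtain ⟨h1, h2⟩ := hcpl
      have hq : q = (p.1, !p.2) := by
        rw [Prod.ext_iff]
        exact ⟨h1.symm, by rcases q with ⟨s,(b|b)⟩ <;> rcases hp : p.2 <;> simp_all⟩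
      subst hq
      refine le_trans (Finset.card_le_card ?_)
        (card_le_four (.inr p : Cc t r) (.inr (p.1,!p.2)) (.inr (p.1,!p.2)) (.inr p))
      intro c hc
      simp only [Finset.mem_union, Finset.mem_insert, Finset.mem_singleton] at hc ⊢
      rcases hc with (h|h)|(h|h) <;> simp [h]

lemma reach_comp (ht : 1 ≤ t) (htr : t < r) (K : Set (Vtx t r)) (hK : K.ncard < 2*t+1)
    (j : Fin (2*r+1)) (c₁ c₂ : Cc t r)
    (h1 : (Sum.inr (j,c₁) : Vtx t r) ∈ Kᶜ) (h2 : (Sum.inr (j,c₂) : Vtx t r) ∈ Kᶜ) :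
    ((G t r).induce Kᶜ).Reachable ⟨Sum.inr (j,c₁), h1⟩ ⟨Sum.inr (j,c₂), h2⟩ := by
  by_cases hadj : c₁ ≠ c₂ ∧ ¬ cpl t r c₁ c₂
  · have hA : (G t r).Adj (Sum.inr (j,c₁)) (Sum.inr (j,c₂)) :=
      ⟨rfl, by simpa using hadj.1, hadj.2⟩
    have : ((G t r).induce Kᶜ).Adj ⟨Sum.inr (j,c₁), h1⟩ ⟨Sum.inr (j,c₂), h2⟩ := hA
    exact this.reachable
  · have hcase : c₁ = c₂ ∨ cpl t r c₁ c₂ := by tauto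
    -- find a common neighbour c₃ avoiding K
    set bad : Finset (Cc t r) :=
      ((Finset.univ.filter fun c' : Cc t r => c' = c₁ ∨ cpl t r c₁ c') ∪
       (Finset.univ.filter fun c' : Cc t r => c' = c₂ ∨ cpl t r c₂ c')) ∪
      (Finset.univ.filter fun c : Cc t r => Sum.inr (j, c) ∈ K) with hbad
    have hbadcard : bad.card ≤ 2*t + 4 := by
      calc bad.card ≤ _ + _ := Finset.card_union_le _ _
      _ ≤ 4 + 2*t := by
          gcongr
          · exact closed_union_card t r ht c₁ c₂ hcase
          · exact card_Kj t r K hK j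
      _ = 2*t + 4 := by omega
    have hex : ∃ c₃ : Cc t r, c₃ ∉ bad := by
      by_contra hcon
      push_neg at hcon
      have : Finset.univ ⊆ bad := fun c _ => hcon c
      have := Finset.card_le_card this
      rw [Finset.card_univ, card_Cc t r (le_of_lt htr)] at this
      omega
    obtain ⟨c₃, hc₃⟩ := hex
    simp only [hbad, Finset.mem_union, Finset.mem_filter, Finset.mem_univ, true_and,
      not_or, not_and] at hc₃
    obtain ⟨⟨hn1, hn2⟩, hn3⟩ := hc₃
    push_neg at hn1 hn2
    have h3 : (Sum.inr (j,c₃) : Vtx t r) ∈ Kᶜ := hn3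
    have hA1 : (G t r).Adj (Sum.inr (j,c₁)) (Sum.inr (j,c₃)) :=
      ⟨rfl, by simpa using (Ne.symm hn1.1), hn1.2⟩
    have a1 : ((G t r).induce Kᶜ).Adj ⟨Sum.inr (j,c₁), h1⟩ ⟨Sum.inr (j,c₃), h3⟩ := hA1
    have hA2 : (G t r).Adj (Sum.inr (j,c₃)) (Sum.inr (j,c₂)) :=
      ⟨rfl, by simpa using hn2.1, fun hc => hn2.2 (cpl_symm t r _ _ hc)⟩
    have a2 : ((G t r).induce Kᶜ).Adj ⟨Sum.inr (j,c₃), h3⟩ ⟨Sum.inr (j,c₂), h2⟩ := hA2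
    exact a1.reachable.trans a2.reachable

lemma comp_to_comp (ht : 1 ≤ t) (htr : t < r) (K : Set (Vtx t r)) (hK : K.ncard < 2*t+1)
    (j j' : Fin (2*r+1)) (c c' : Cc t r)
    (h : (Sum.inr (j,c) : Vtx t r) ∈ Kᶜ) (h' : (Sum.inr (j',c') : Vtx t r) ∈ Kᶜ) :
    ((G t r).induce Kᶜ).Reachable ⟨Sum.inr (j,c), h⟩ ⟨Sum.inr (j',c'), h'⟩ := by
  obtain ⟨x, hx1, hx2, hx3⟩ := exists_good_x t r K htr hK j j'
  have hx1' : (Sum.inl x : Vtx t r) ∈ Kᶜ := hx1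
  have hx2' : (Sum.inr (j, Sum.inl x) : Vtx t r) ∈ Kᶜ := hx2
  have hx3' : (Sum.inr (j', Sum.inl x) : Vtx t r) ∈ Kᶜ := hx3
  have r1 := reach_comp t r ht htr K hK j c (Sum.inl x) h hx2'
  have r2 := reach_comp t r ht htr K hK j' (Sum.inl x) c' hx3' h'
  have hA1 : (G t r).Adj (Sum.inr (j, Sum.inl x)) (Sum.inl x) := rfl
  have a1 : ((G t r).induce Kᶜ).Adj ⟨Sum.inr (j, Sum.inl x), hx2'⟩ ⟨Sum.inl x, hx1'⟩ := hA1
  have hA2 : (G t r).Adj (Sum.inl x) (Sum.inr (j', Sum.inl x)) := rfl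
  have a2 : ((G t r).induce Kᶜ).Adj ⟨Sum.inl x, hx1'⟩ ⟨Sum.inr (j', Sum.inl x), hx3'⟩ := hA2
  exact r1.trans (a1.reachable.trans (a2.reachable.trans r2))

lemma G_connected (ht : 1 ≤ t) (htr : t < r) (K : Set (Vtx t r)) (hK : K.ncard < 2*t+1) :
    ((G t r).induce Kᶜ).Connected := by
  rw [SimpleGraph.connected_iff]
  have j0 : Fin (2*r+1) := ⟨0, by omega⟩
  obtain ⟨x0, hx0, hx0', -⟩ := exists_good_x t r K htr hK j0 j0
  constructor
  · -- preconnected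
    intro u v
    have key : ∀ (w : ↥(Kᶜ : Set (Vtx t r))),
        ∃ (j : Fin (2*r+1)) (c : Cc t r) (hw : (Sum.inr (j,c) : Vtx t r) ∈ Kᶜ),
          ((G t r).induce Kᶜ).Reachable w ⟨Sum.inr (j,c), hw⟩ := by
      rintro ⟨(x | ⟨j, c⟩), hw⟩
      · obtain ⟨j, hj⟩ := exists_good_j t r K htr hK x
        have hj' : (Sum.inr (j, Sum.inl x) : Vtx t r) ∈ Kᶜ := hj
        have hA : (G t r).Adj (Sum.inl x) (Sum.inr (j, Sum.inl x)) := rfl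
        have a : ((G t r).induce Kᶜ).Adj ⟨Sum.inl x, hw⟩ ⟨Sum.inr (j, Sum.inl x), hj'⟩ := hA
        exact ⟨j, Sum.inl x, hj', a.reachable⟩
      · exact ⟨j, c, hw, SimpleGraph.Reachable.refl _⟩
    obtain ⟨j, c, hw, ru⟩ := key u
    obtain ⟨j', c', hw', rv⟩ := key v
    exact ru.trans ((comp_to_comp t r ht htr K hK j j' c c' hw hw').trans rv.symm)
  · -- nonempty
    exact ⟨⟨Sum.inl x0, hx0⟩⟩


/-- For all integers `t, r, k` with `1 ≤ t < r` and `k > t(2r+1)/(2t+1)`, there is a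
`(2t+1)`-connected `(2r+1)`-regular finite simple graph with no `2k`-factor. -/
theorem exists_connected_regular_no_2k_factor
    (t r k : ℕ) (ht : 1 ≤ t) (htr : t < r) (hk : t * (2 * r + 1) < k * (2 * t + 1)) :
    ∃ (V : Type) (_ : Fintype V) (G : SimpleGraph V),
      G.IsMConnected (2 * t + 1) ∧
      (∀ v : V, G.degree v = 2 * r + 1) ∧
      ¬ ∃ H : SimpleGraph V, H ≤ G ∧ ∀ v : V, H.degree v = 2 * k := by
  refine ⟨Vtx t r, inferInstance, G t r, ⟨?_, ?_⟩, ?_, ?_⟩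
  · have hcard : Fintype.card (Vtx t r) = (2*t+1) + (2*r+1) * (2*r+3) := by
      rw [Fintype.card_sum, Fintype.card_prod, ZMod.card, Fintype.card_fin,
        card_Cc t r (le_of_lt htr)]
    have h1 : 1 ≤ (2*r+1) * (2*r+3) := Nat.one_le_iff_ne_zero.mpr (by positivity)
    omega
  · exact fun K hK => G_connected t r ht htr K hK
  · exact fun v => degree_G t r ht (le_of_lt htr) v
  · rintro ⟨H, hle, hdeg⟩
    exact no_factor t r ht htr k hk H hle hdeg
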